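/- Let F = ⟨St_A, St_B, O, ρ⟩ be a finite game form and α : O∖E → [0,1] a partial valuation of the outcomes. In the three-state reachability game C_{(F,α)}, the initial state q₀ is maximizable (and hence all states are) if and only if F is reach-maximizable with respect to α. -/

import Mathlib

open scoped BigOperators Classical

noncomputable section

/-- A probability distribution on a finite type. -/
def FDist (X : Type) [Fintype X] : Type :=
  { p : X → ℝ // (∀ x, 0 ≤ p x) ∧ ∑ x, p x = 1 }

namespace CRG

variable {A B Q D : Type} [Fintype A] [Fintype B] [Fintype Q] [Fintype D]

/-- The support of a distribution. -/
def supp {X : Type} [Fintype X] (σ : FDist X) : Set X := { x | σ.1 x ≠ 0 }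

/-- The Dirac distribution. -/
def dirac {X : Type} [Fintype X] [DecidableEq X] (x : X) : FDist X :=
  ⟨fun y => if y = x then 1 else 0, by
    constructor
    · intro y
      dsimp only
      split <;> norm_num
    · simp⟩

/-- Outcome of a pair of mixed strategies in the game in normal form with payoff `u`. -/
def out (u : A → B → ℝ) (σA : FDist A) (σB : FDist B) : ℝ :=
  ∑ a, ∑ b, σA.1 a * σB.1 b * u a b

/-- Outcome of a mixed strategy of Player A against a pure action of Player B. -/
def outB (u : A → B → ℝ) (σA : FDist A) (b : B) : ℝ :=
  ∑ a, σA.1 a * u a b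

/-- The value of a Player A mixed strategy in a game in normal form. -/
def valStratGF (u : A → B → ℝ) (σA : FDist A) : ℝ :=
  ⨅ σB : FDist B, out u σA σB

/-- The (von Neumann) value of a finite game in normal form. -/
def valGF (u : A → B → ℝ) : ℝ :=
  ⨆ σA : FDist A, valStratGF u σA

/-- The optimal Player A mixed strategies in a game in normal form. -/
def OptA (u : A → B → ℝ) : Set (FDist A) := { σA | valStratGF u σA = valGF u }

/-- The optimal actions of Player B against the Player A mixed strategy `σA`. -/
def optActs (u : A → B → ℝ) (σA : FDist A) : Set B :=
  { b | outB u σA b = valStratGF u σA }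

/-- μ_v : the lift of a valuation of the states to the Nature states. -/
def lift (dist : D → FDist Q) (v : Q → ℝ) (d : D) : ℝ := ∑ q, (dist d).1 q * v q

/-- The payoff function of the local interaction `F_q` valued by `μ_m`. -/
def locPay (δ : Q → A → B → D) (dist : D → FDist Q) (m : Q → ℝ) (q : Q) : A → B → ℝ :=
  fun a b => lift dist m (δ q a b)

/-- One-step transition probability between states. -/
def step (δ : Q → A → B → D) (dist : D → FDist Q) (σA : FDist A) (σB : FDist B)
    (q q' : Q) : ℝ :=
  ∑ a, ∑ b, σA.1 a * σB.1 b * (dist (δ q a b)).1 q'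

/-- The operator Δ on valuations of the states. -/
def Δop (δ : Q → A → B → D) (dist : D → FDist Q) (T : Q) (v : Q → ℝ) : Q → ℝ :=
  fun q => if q = T then 1 else valGF (fun a b => lift dist v (δ q a b))

/-- The target `T` is an absorbing (self-looping) sink. -/
def Absorbing (δ : Q → A → B → D) (dist : D → FDist Q) (T : Q) : Prop :=
  ∀ a b, (dist (δ T a b)).1 = fun q => if q = T then 1 else 0

/-- `m` is the least fixed point of Δ on `[0,1]^Q`. -/
def IsLfpDelta (δ : Q → A → B → D) (dist : D → FDist Q) (T : Q) (m : Q → ℝ) : Prop :=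
  (∀ q, m q ∈ Set.Icc (0:ℝ) 1) ∧ Δop δ dist T m = m ∧
    ∀ v : Q → ℝ, (∀ q, v q ∈ Set.Icc (0:ℝ) 1) → Δop δ dist T v = v → ∀ q, m q ≤ v q

/-- A strategy: a history of past states together with the current state gives a
mixed action.  (This encodes maps `Q⁺ → 𝒟(X)`.) -/
def Strat (Q X : Type) [Fintype X] : Type := List Q → Q → FDist X

/-- Residual strategy after the history `π` has been played. -/
def residual {X : Type} [Fintype X] (s : Strat Q X) (π : List Q) : Strat Q X :=
  fun h q => s (π ++ h) q

/-- The (positional) strategy associated with a per-state choice of mixed actions. -/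
def ofPos {X : Type} [Fintype X] (s : Q → FDist X) : Strat Q X := fun _ q => s q

/-- Probability of reaching the set `S` within `n` steps from current state `q`,
history `h` having been played. -/
def reachSetNAux (δ : Q → A → B → D) (dist : D → FDist Q) (S : Set Q) :
    ℕ → Strat Q A → Strat Q B → List Q → Q → ℝ
  | 0, _, _, _, q => if q ∈ S then 1 else 0
  | n + 1, sA, sB, h, q =>
      if q ∈ S then 1
      else ∑ q', step δ dist (sA h q) (sB h q) q q' *
        reachSetNAux δ dist S n sA sB (h ++ [q]) q'

/-- Probability of reaching the set `S` within `n` steps from state `q`. -/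
def reachSetN (δ : Q → A → B → D) (dist : D → FDist Q) (S : Set Q) (n : ℕ)
    (sA : Strat Q A) (sB : Strat Q B) (q : Q) : ℝ :=
  reachSetNAux δ dist S n sA sB [] q

/-- Probability of reaching the target `T` within `n` steps from state `q`. -/
def reachN (δ : Q → A → B → D) (dist : D → FDist Q) (T : Q) (n : ℕ)
    (sA : Strat Q A) (sB : Strat Q B) (q : Q) : ℝ :=
  reachSetN δ dist {T} n sA sB q

/-- Probability of eventually reaching the target `T` from state `q`. -/
def reach (δ : Q → A → B → D) (dist : D → FDist Q) (T : Q)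
    (sA : Strat Q A) (sB : Strat Q B) (q : Q) : ℝ :=
  ⨆ n : ℕ, reachN δ dist T n sA sB q

/-- The value of a Player A strategy from state `q`. -/
def valA (δ : Q → A → B → D) (dist : D → FDist Q) (T : Q) (sA : Strat Q A) (q : Q) : ℝ :=
  ⨅ sB : Strat Q B, reach δ dist T sA sB q

/-- The value of the game from state `q`. -/
def value (δ : Q → A → B → D) (dist : D → FDist Q) (T : Q) (q : Q) : ℝ :=
  ⨆ sA : Strat Q A, valA δ dist T sA q

/-- A state is maximizable when Player A has an optimal strategy from it. -/
def Maximizable (δ : Q → A → B → D) (dist : D → FDist Q) (T q : Q) : Prop :=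
  ∃ sA : Strat Q A, valA δ dist T sA q = value δ dist T q

/-- A positional Player A strategy locally dominates the valuation `v`. -/
def LocallyDominates (δ : Q → A → B → D) (dist : D → FDist Q)
    (sA : Q → FDist A) (v : Q → ℝ) : Prop :=
  ∀ q, v q ≤ valStratGF (fun a b => lift dist v (δ q a b)) (sA q)

/-- Transition function ι of the MDP induced by a positional Player A strategy. -/
def stepB [DecidableEq B] (δ : Q → A → B → D) (dist : D → FDist Q)
    (sA : Q → FDist A) (q : Q) (b : B) (q' : Q) : ℝ :=
  step δ dist (sA q) (dirac b) q q'

/-- An end component of the MDP induced by the positional Player A strategy `sA`. -/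
structure EndComp [DecidableEq B] (δ : Q → A → B → D) (dist : D → FDist Q)
    (sA : Q → FDist A) where
  states : Set Q
  acts : Q → Set B
  acts_nonempty : ∀ q ∈ states, (acts q).Nonempty
  closed : ∀ q ∈ states, ∀ b ∈ acts q, ∀ q', stepB δ dist sA q b q' ≠ 0 → q' ∈ states
  connected : ∀ q ∈ states, ∀ q' ∈ states,
    Relation.ReflTransGen
      (fun x y => x ∈ states ∧ ∃ b ∈ acts x, stepB δ dist sA x b y ≠ 0) q q'

/-- `S_D` : the Nature states having a non-zero probability to reach `S`. -/
def natS (dist : D → FDist Q) (S : Set Q) : Set D :=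
  { d | ∃ q ∈ S, (dist d).1 q ≠ 0 }

/-- Progressive optimal local strategies at `q` w.r.t. the set `Gd`. -/
def Prog (δ : Q → A → B → D) (dist : D → FDist Q) (m : Q → ℝ) (q : Q)
    (Gd : Set Q) : Set (FDist A) :=
  { σA | σA ∈ OptA (locPay δ dist m q) ∧
      ∀ b ∈ optActs (locPay δ dist m q) σA, ∃ a ∈ supp σA, δ q a b ∈ natS dist Gd }

/-- Risky optimal local strategies at `q` w.r.t. the set `Bd`. -/
def Risk (δ : Q → A → B → D) (dist : D → FDist Q) (m : Q → ℝ) (q : Q)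
    (Bd : Set Q) : Set (FDist A) :=
  { σA | σA ∈ OptA (locPay δ dist m q) ∧
      ∃ b ∈ optActs (locPay δ dist m q) σA, ∃ a ∈ supp σA, δ q a b ∈ natS dist Bd }

/-- Efficient local strategies: progressive and not risky. -/
def Eff (δ : Q → A → B → D) (dist : D → FDist Q) (m : Q → ℝ) (q : Q)
    (Gd Bd : Set Q) : Set (FDist A) :=
  Prog δ dist m q Gd \ Risk δ dist m q Bd

/-- The increasing sequence of sets of secure states w.r.t. `Bd`. -/
def SecN (δ : Q → A → B → D) (dist : D → FDist Q) (m : Q → ℝ) (T : Q) (Bd : Set Q) :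
    ℕ → Set Q
  | 0 => {T}
  | n + 1 => SecN δ dist m T Bd n ∪
      { q | q ∉ Bd ∧ (Eff δ dist m q (SecN δ dist m T Bd n) Bd).Nonempty }

/-- The set of secure states w.r.t. `Bd`. -/
def Sec (δ : Q → A → B → D) (dist : D → FDist Q) (m : Q → ℝ) (T : Q) (Bd : Set Q) :
    Set Q :=
  (⋃ n : ℕ, SecN δ dist m T Bd n) ∪ { q | m q = 0 }

/-- The sequence of sets of bad states. -/
def BadN (δ : Q → A → B → D) (dist : D → FDist Q) (m : Q → ℝ) (T : Q) : ℕ → Set Q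
  | 0 => ∅
  | n + 1 => (Sec δ dist m T (BadN δ dist m T n))ᶜ

/-- The set of bad states. -/
def Bad (δ : Q → A → B → D) (dist : D → FDist Q) (m : Q → ℝ) (T : Q) : Set Q :=
  BadN δ dist m T (Fintype.card Q)

/-- `α[y]` : the total valuation extending the partial valuation `α : O∖E → [0,1]`
with the value `y` on `E`. -/
def extendVal {O : Type} (E : Set O) (α : O → ℝ) (y : ℝ) : O → ℝ :=
  fun o => if o ∈ E then y else α o

/-- The map `f_α : y ↦ val_{⟨F, α[y]⟩}`. -/
def fval {O : Type} (ρ : A → B → O) (E : Set O) (α : O → ℝ) (y : ℝ) : ℝ :=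
  valGF (fun a b => extendVal E α y (ρ a b))

/-- `v` is the least fixed point of `f_α` on `[0,1]`. -/
def IsLfpVal {O : Type} (ρ : A → B → O) (E : Set O) (α : O → ℝ) (v : ℝ) : Prop :=
  v ∈ Set.Icc (0:ℝ) 1 ∧ fval ρ E α v = v ∧
    ∀ y ∈ Set.Icc (0:ℝ) 1, fval ρ E α y = y → v ≤ y

/-- The game form `ρ` is reach-maximizable w.r.t. the partial valuation `α : O∖E → [0,1]`. -/
def RMwrt {O : Type} (ρ : A → B → O) (E : Set O) (α : O → ℝ) : Prop :=
  ∀ v : ℝ, IsLfpVal ρ E α v →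
    v = 0 ∨
      ∃ σA ∈ OptA (fun a b => extendVal E α v (ρ a b)),
        ∀ b ∈ optActs (fun a b => extendVal E α v (ρ a b)) σA,
          ∃ a ∈ supp σA, ρ a b ∉ E

/-- A reach-maximizable game form: RM w.r.t. every partial valuation of its outcomes. -/
def RMform {O : Type} (ρ : A → B → O) : Prop :=
  ∀ (E : Set O) (α : O → ℝ), (∀ o ∉ E, α o ∈ Set.Icc (0:ℝ) 1) → RMwrt ρ E α

/-- A determined game form. -/
def Determined {O : Type} (ρ : A → B → O) : Prop :=
  ∀ E : Set O, (∃ a, ∀ b, ρ a b ∈ E) ∨ (∃ b, ∀ a, ρ a b ∉ E)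

/-- Transition function of the three-state reachability game `C_{(F,α)}`:
state `0` is `q₀`, state `1` is the target `⊤`, state `2` is the bin `⊥`. -/
def triδ {O : Type} (ρ : A → B → O) (E : Set O) :
    Fin 3 → A → B → (Fin 3 ⊕ {o : O // o ∉ E}) :=
  fun s a b =>
    if s = 0 then
      if h : ρ a b ∈ E then Sum.inl 0 else Sum.inr ⟨ρ a b, h⟩
    else Sum.inl s

/-- Nature distributions of the three-state reachability game `C_{(F,α)}`. -/
def triDist {O : Type} (E : Set O) (α : O → ℝ)
    (hα : ∀ o ∉ E, α o ∈ Set.Icc (0:ℝ) 1) :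
    (Fin 3 ⊕ {o : O // o ∉ E}) → FDist (Fin 3) := fun d =>
  match d with
  | Sum.inl t => dirac t
  | Sum.inr x =>
      ⟨![0, α x.1, 1 - α x.1], by
        obtain ⟨h0, h1⟩ := hα x.1 x.2
        constructor
        · intro s
          fin_cases s <;> simp <;> linarith
        · simp [Fin.sum_univ_three]⟩

/-- An abstract (finite) game form with actions `A` and `B`. -/
structure GameForm (A B : Type) where
  O : Type
  fin : Fintype O
  ρ : A → B → O

/-- All local interactions of the arena `δ` belong to the set `𝒢` of game forms
(up to a renaming of the outcomes into Nature states). -/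
def UsesForms {Q D : Type} (𝒢 : Set (GameForm A B)) (δ : Q → A → B → D) : Prop :=
  ∀ q, ∃ F ∈ 𝒢, ∃ g : F.O → D, δ q = fun a b => g (F.ρ a b)

/-- The sequence of iterates of Δ starting from the valuation `1_{⊤}`. -/
def vseq (δ : Q → A → B → D) (dist : D → FDist Q) (T : Q) : ℕ → Q → ℝ
  | 0 => fun q => if q = T then 1 else 0
  | n + 1 => Δop δ dist T (vseq δ dist T n)

/-- Relevant paths w.r.t. the strategy `sA` from the state `q₀`: the pair `(h, q)`
encodes the path `h · q` (history `h`, current state `q`). -/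
inductive Relevant [DecidableEq B] (δ : Q → A → B → D) (dist : D → FDist Q)
    (m : Q → ℝ) (sA : Strat Q A) (q₀ : Q) : List Q → Q → Prop
  | base : Relevant δ dist m sA q₀ [] q₀
  | step {h : List Q} {q q' : Q} :
      Relevant δ dist m sA q₀ h q →
      (∃ b ∈ optActs (locPay δ dist m q) (sA h q),
        0 < CRG.step δ dist (sA h q) (dirac b) q q') →
      Relevant δ dist m sA q₀ (h ++ [q]) q'

section MyAux
-- ============ my lemmas ============

lemma fd_nonneg {X : Type} [Fintype X] (σ : FDist X) (x : X) : 0 ≤ σ.1 x := σ.2.1 x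
lemma fd_sum_one {X : Type} [Fintype X] (σ : FDist X) : ∑ x, σ.1 x = 1 := σ.2.2
set_option linter.unusedSectionVars false

lemma fd_le_one {X : Type} [Fintype X] (σ : FDist X) (x : X) : σ.1 x ≤ 1 := by
  have h := Finset.single_le_sum (f := σ.1) (fun i _ => σ.2.1 i) (Finset.mem_univ x)
  rw [fd_sum_one σ] at h
  exact h

instance instNonemptyFDist {X : Type} [Fintype X] [Nonempty X] : Nonempty (FDist X) :=
  ⟨dirac (Classical.arbitrary X)⟩

lemma dirac_apply {X : Type} [Fintype X] [DecidableEq X] (x y : X) :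
    (dirac x).1 y = if y = x then 1 else 0 := rfl

variable (u : A → B → ℝ)

lemma out_dirac (σ : FDist A) (b : B) : out u σ (dirac b) = outB u σ b := by
  unfold out outB
  refine Finset.sum_congr rfl fun a _ => ?_
  rw [Finset.sum_eq_single b]
  · simp [dirac_apply]
  · intro b' _ hb'
    simp [dirac_apply, hb']
  · simp

lemma out_eq_sum (σ : FDist A) (τ : FDist B) :
    out u σ τ = ∑ b, τ.1 b * outB u σ b := by
  unfold out outB
  rw [Finset.sum_comm]
  refine Finset.sum_congr rfl fun b _ => ?_
  rw [Finset.mul_sum]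
  refine Finset.sum_congr rfl fun a _ => by ring

lemma le_outB (σ : FDist A) (b : B) {m : ℝ} (h : ∀ a, m ≤ u a b) : m ≤ outB u σ b := by
  calc m = ∑ a, σ.1 a * m := by rw [← Finset.sum_mul, fd_sum_one σ, one_mul]
    _ ≤ outB u σ b := Finset.sum_le_sum fun a _ =>
        mul_le_mul_of_nonneg_left (h a) (fd_nonneg σ a)

lemma outB_le (σ : FDist A) (b : B) {M : ℝ} (h : ∀ a, u a b ≤ M) : outB u σ b ≤ M := by
  calc outB u σ b ≤ ∑ a, σ.1 a * M := Finset.sum_le_sum fun a _ =>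
        mul_le_mul_of_nonneg_left (h a) (fd_nonneg σ a)
    _ = M := by rw [← Finset.sum_mul, fd_sum_one σ, one_mul]

variable [Nonempty A] [Nonempty B]

lemma inf'_outB_le_out (σ : FDist A) (τ : FDist B) :
    Finset.univ.inf' Finset.univ_nonempty (outB u σ) ≤ out u σ τ := by
  rw [out_eq_sum]
  set c := Finset.univ.inf' Finset.univ_nonempty (outB u σ) with hc
  calc c = ∑ b, τ.1 b * c := by rw [← Finset.sum_mul, fd_sum_one τ, one_mul]
    _ ≤ _ := Finset.sum_le_sum fun b _ =>
        mul_le_mul_of_nonneg_left (Finset.inf'_le _ (Finset.mem_univ b)) (fd_nonneg τ b)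

lemma valStratGF_eq (σ : FDist A) :
    valStratGF u σ = Finset.univ.inf' Finset.univ_nonempty (outB u σ) := by
  refine le_antisymm ?_ (le_ciInf fun τ => inf'_outB_le_out u σ τ)
  obtain ⟨b₀, -, hb₀⟩ := Finset.exists_mem_eq_inf' (Finset.univ_nonempty) (outB u σ)
  rw [hb₀]
  have : BddBelow (Set.range fun τ : FDist B => out u σ τ) := by
    refine ⟨Finset.univ.inf' Finset.univ_nonempty (outB u σ), ?_⟩
    rintro _ ⟨τ, rfl⟩
    exact inf'_outB_le_out u σ τ
  exact (ciInf_le this (dirac b₀)).trans_eq (out_dirac u σ b₀)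

lemma valStratGF_le_outB (σ : FDist A) (b : B) : valStratGF u σ ≤ outB u σ b := by
  rw [valStratGF_eq]
  exact Finset.inf'_le _ (Finset.mem_univ b)

lemma exists_optAct (σ : FDist A) : ∃ b, b ∈ optActs u σ := by
  obtain ⟨b₀, -, hb₀⟩ := Finset.exists_mem_eq_inf' (Finset.univ_nonempty) (outB u σ)
  exact ⟨b₀, by rw [optActs, Set.mem_setOf_eq, valStratGF_eq, hb₀]⟩

lemma le_valStratGF (σ : FDist A) {m : ℝ} (h : ∀ a b, m ≤ u a b) : m ≤ valStratGF u σ := by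
  rw [valStratGF_eq]
  rw [Finset.le_inf'_iff]
  exact fun b _ => le_outB u σ b (fun a => h a b)

lemma valStratGF_le (σ : FDist A) {M : ℝ} (h : ∀ a b, u a b ≤ M) : valStratGF u σ ≤ M :=
  (valStratGF_le_outB u σ (Classical.arbitrary B)).trans
    (outB_le u σ _ (fun a => h a _))

lemma bddAbove_valStratGF : BddAbove (Set.range fun σ : FDist A => valStratGF u σ) := by
  refine ⟨Finset.univ.sup' Finset.univ_nonempty fun a =>
    Finset.univ.sup' Finset.univ_nonempty (u a), ?_⟩
  rintro _ ⟨σ, rfl⟩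
  refine valStratGF_le u σ fun a b => ?_
  exact le_trans (Finset.le_sup' (u a) (Finset.mem_univ b))
    (Finset.le_sup' (fun a => Finset.univ.sup' Finset.univ_nonempty (u a)) (Finset.mem_univ a))

lemma valStratGF_le_valGF (σ : FDist A) : valStratGF u σ ≤ valGF u :=
  le_ciSup (bddAbove_valStratGF u) σ

lemma valGF_le {M : ℝ} (h : ∀ a b, u a b ≤ M) : valGF u ≤ M :=
  ciSup_le fun σ => valStratGF_le u σ h

lemma le_valGF {m : ℝ} (h : ∀ a b, m ≤ u a b) : m ≤ valGF u :=
  le_trans (le_valStratGF u (Classical.arbitrary (FDist A)) h)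
    (valStratGF_le_valGF u _)

lemma valGF_mono {u' : A → B → ℝ} (h : ∀ a b, u a b ≤ u' a b) : valGF u ≤ valGF u' := by
  refine ciSup_le fun σ => le_trans ?_ (valStratGF_le_valGF u' σ)
  rw [valStratGF_eq, valStratGF_eq]
  rw [Finset.le_inf'_iff]
  intro b hb
  refine Finset.inf'_le_of_le _ hb ?_
  exact Finset.sum_le_sum fun a _ => mul_le_mul_of_nonneg_left (h a b) (fd_nonneg σ a)

section Lfp
variable {O : Type} [Nonempty A] [Nonempty B]

lemma fval_mono (ρ : A → B → O) (E : Set O) (α : O → ℝ) {y y' : ℝ} (h : y ≤ y') :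
    fval ρ E α y ≤ fval ρ E α y' := by
  refine valGF_mono _ fun a b => ?_
  unfold extendVal
  split_ifs
  · exact h
  · exact le_rfl

lemma fval_mem (ρ : A → B → O) (E : Set O) (α : O → ℝ)
    (hα : ∀ o ∉ E, α o ∈ Set.Icc (0:ℝ) 1) {y : ℝ} (hy : y ∈ Set.Icc (0:ℝ) 1) :
    fval ρ E α y ∈ Set.Icc (0:ℝ) 1 := by
  have hmem : ∀ a b, extendVal E α y (ρ a b) ∈ Set.Icc (0:ℝ) 1 := by
    intro a b
    unfold extendVal
    split_ifs with h
    · exact hy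
    · exact hα _ h
  exact ⟨le_valGF _ fun a b => (hmem a b).1, valGF_le _ fun a b => (hmem a b).2⟩

lemma exists_isLfpVal (ρ : A → B → O) (E : Set O) (α : O → ℝ)
    (hα : ∀ o ∉ E, α o ∈ Set.Icc (0:ℝ) 1) : ∃ v, IsLfpVal ρ E α v := by
  classical
  set S : Set ℝ := {y | y ∈ Set.Icc (0:ℝ) 1 ∧ fval ρ E α y ≤ y} with hS
  have h1 : (1:ℝ) ∈ S := by
    refine ⟨by norm_num, ?_⟩
    exact (fval_mem ρ E α hα (by norm_num)).2
  have hne : S.Nonempty := ⟨1, h1⟩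
  have hbdd : BddBelow S := ⟨0, fun y hy => hy.1.1⟩
  set v := sInf S with hv
  have hv0 : 0 ≤ v := le_csInf hne fun y hy => hy.1.1
  have hv1 : v ≤ 1 := csInf_le hbdd h1
  have hfv : fval ρ E α v ≤ v := by
    refine le_csInf hne fun y hy => ?_
    exact (fval_mono ρ E α (csInf_le hbdd hy)).trans hy.2
  have hvf : v ≤ fval ρ E α v := by
    refine csInf_le hbdd ?_
    exact ⟨fval_mem ρ E α hα ⟨hv0, hv1⟩, fval_mono ρ E α hfv⟩
  refine ⟨v, ⟨hv0, hv1⟩, le_antisymm hfv hvf, fun y hy hfy => ?_⟩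
  exact csInf_le hbdd ⟨hy, le_of_eq hfy⟩

lemma isLfpVal_unique {ρ : A → B → O} {E : Set O} {α : O → ℝ} {v v' : ℝ}
    (h : IsLfpVal ρ E α v) (h' : IsLfpVal ρ E α v') : v = v' :=
  le_antisymm (h.2.2 v' h'.1 h'.2.1) (h'.2.2 v h.1 h.2.1)

end Lfp

section GenericGame
variable {O : Type}

lemma iSup_add_mul (f : ℕ → ℝ) (hb : BddAbove (Set.range f)) (w l : ℝ) (hl : 0 ≤ l) :
    ⨆ n, (w + l * f n) = w + l * ⨆ n, f n := by
  obtain ⟨c, hc⟩ := hb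
  have hub : ∀ n, f n ≤ c := fun n => hc ⟨n, rfl⟩
  have hb2 : BddAbove (Set.range fun n => w + l * f n) :=
    ⟨w + l * c, by
      rintro _ ⟨n, rfl⟩
      exact add_le_add_right (mul_le_mul_of_nonneg_left (hub n) hl) w⟩
  apply le_antisymm
  · refine ciSup_le fun n => add_le_add_right (mul_le_mul_of_nonneg_left ?_ hl) w
    exact le_ciSup ⟨c, fun x hx => by obtain ⟨n, rfl⟩ := hx; exact hub n⟩ n
  · rw [Real.mul_iSup_of_nonneg hl]
    have h1 : (⨆ n, l * f n) ≤ (⨆ n, w + l * f n) - w := by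
      refine ciSup_le fun n => ?_
      have := le_ciSup hb2 n
      linarith
    linarith

instance instNonemptyStrat {Q X : Type} [Fintype X] [Nonempty X] : Nonempty (Strat Q X) :=
  ⟨fun _ _ => Classical.arbitrary (FDist X)⟩

lemma sum_mul_one (σ : FDist A) (τ : FDist B) : ∑ a, ∑ b, σ.1 a * τ.1 b = 1 := by
  rw [← Finset.sum_mul_sum, fd_sum_one, fd_sum_one, mul_one]

variable (δ : Q → A → B → D) (dist : D → FDist Q)

lemma step_nonneg (σ : FDist A) (τ : FDist B) (q q' : Q) : 0 ≤ step δ dist σ τ q q' :=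
  Finset.sum_nonneg fun a _ => Finset.sum_nonneg fun b _ =>
    mul_nonneg (mul_nonneg (fd_nonneg σ a) (fd_nonneg τ b)) (fd_nonneg _ q')

lemma step_sum_one (σ : FDist A) (τ : FDist B) (q : Q) :
    ∑ q', step δ dist σ τ q q' = 1 := by
  unfold step
  rw [Finset.sum_comm]
  have h : ∀ a, ∑ q', ∑ b, σ.1 a * τ.1 b * (dist (δ q a b)).1 q'
      = ∑ b, σ.1 a * τ.1 b := by
    intro a
    rw [Finset.sum_comm]
    refine Finset.sum_congr rfl fun b _ => ?_
    rw [← Finset.mul_sum, fd_sum_one, mul_one]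
  calc ∑ a, ∑ q', ∑ b, σ.1 a * τ.1 b * (dist (δ q a b)).1 q'
      = ∑ a, ∑ b, σ.1 a * τ.1 b := Finset.sum_congr rfl fun a _ => h a
    _ = 1 := sum_mul_one σ τ

lemma aux_mem (S : Set Q) :
    ∀ (N : ℕ) (sA : Strat Q A) (sB : Strat Q B) (h : List Q) (q : Q),
      reachSetNAux δ dist S N sA sB h q ∈ Set.Icc (0:ℝ) 1 := by
  intro N
  induction N with
  | zero =>
    intro sA sB h q
    unfold reachSetNAux
    split <;> norm_num
  | succ N ih =>
    intro sA sB h q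
    unfold reachSetNAux
    split
    · norm_num
    constructor
    · refine Finset.sum_nonneg fun q' _ => mul_nonneg (step_nonneg δ dist _ _ _ _) ?_
      exact (ih sA sB (h ++ [q]) q').1
    · calc ∑ q', step δ dist (sA h q) (sB h q) q q' * reachSetNAux δ dist S N sA sB (h ++ [q]) q'
          ≤ ∑ q', step δ dist (sA h q) (sB h q) q q' * 1 := by
            refine Finset.sum_le_sum fun q' _ => ?_
            exact mul_le_mul_of_nonneg_left (ih sA sB (h ++ [q]) q').2 (step_nonneg δ dist _ _ _ _)
        _ = 1 := by
            simp only [mul_one]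
            exact step_sum_one δ dist _ _ q

lemma aux_mono (S : Set Q) :
    ∀ (N : ℕ) (sA : Strat Q A) (sB : Strat Q B) (h : List Q) (q : Q),
      reachSetNAux δ dist S N sA sB h q ≤ reachSetNAux δ dist S (N + 1) sA sB h q := by
  intro N
  induction N with
  | zero =>
    intro sA sB h q
    unfold reachSetNAux
    split
    · simp
    · refine Finset.sum_nonneg fun q' _ => mul_nonneg (step_nonneg δ dist _ _ _ _) ?_
      exact (aux_mem δ dist S 0 sA sB (h ++ [q]) q').1
  | succ N ih =>
    intro sA sB h q
    rw [show N + 1 + 1 = (N+1) + 1 from rfl]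
    unfold reachSetNAux
    split
    · exact le_rfl
    · refine Finset.sum_le_sum fun q' _ => ?_
      exact mul_le_mul_of_nonneg_left (ih sA sB (h ++ [q]) q') (step_nonneg δ dist _ _ _ _)

lemma aux_append (S : Set Q) (π : List Q) :
    ∀ (N : ℕ) (sA : Strat Q A) (sB : Strat Q B) (h : List Q) (q : Q),
      reachSetNAux δ dist S N sA sB (π ++ h) q
        = reachSetNAux δ dist S N (residual sA π) (residual sB π) h q := by
  intro N
  induction N with
  | zero => intro sA sB h q; rfl
  | succ N ih =>
    intro sA sB h q
    unfold reachSetNAux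
    split
    · rfl
    · refine Finset.sum_congr rfl fun q' _ => ?_
      have hres : ∀ {X : Type} [Fintype X] (s : Strat Q X), residual s π h q = s (π ++ h) q :=
        fun s => rfl
      rw [hres, hres]
      congr 1
      rw [show π ++ h ++ [q] = π ++ (h ++ [q]) from List.append_assoc π h [q]]
      exact ih sA sB (h ++ [q]) q'

lemma reachN_mono (T : Q) (sA : Strat Q A) (sB : Strat Q B) (q : Q) :
    Monotone fun N => reachN δ dist T N sA sB q := by
  refine monotone_nat_of_le_succ fun N => ?_
  exact aux_mono δ dist {T} N sA sB [] q

lemma reachN_mem (T : Q) (N : ℕ) (sA : Strat Q A) (sB : Strat Q B) (q : Q) :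
    reachN δ dist T N sA sB q ∈ Set.Icc (0:ℝ) 1 :=
  aux_mem δ dist {T} N sA sB [] q

lemma bddAbove_reachN (T : Q) (sA : Strat Q A) (sB : Strat Q B) (q : Q) :
    BddAbove (Set.range fun N => reachN δ dist T N sA sB q) :=
  ⟨1, by rintro _ ⟨N, rfl⟩; exact (reachN_mem δ dist T N sA sB q).2⟩

lemma reach_mem (T : Q) (sA : Strat Q A) (sB : Strat Q B) (q : Q) :
    reach δ dist T sA sB q ∈ Set.Icc (0:ℝ) 1 := by
  constructor
  · exact le_trans (reachN_mem δ dist T 0 sA sB q).1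
      (le_ciSup (bddAbove_reachN δ dist T sA sB q) 0)
  · exact ciSup_le fun N => (reachN_mem δ dist T N sA sB q).2

variable [Nonempty A] [Nonempty B]

lemma valA_mem (T : Q) (sA : Strat Q A) (q : Q) : valA δ dist T sA q ∈ Set.Icc (0:ℝ) 1 := by
  constructor
  · exact le_ciInf fun sB => (reach_mem δ dist T sA sB q).1
  · refine le_trans (ciInf_le ⟨0, ?_⟩ (Classical.arbitrary _)) (reach_mem δ dist T sA _ q).2
    rintro _ ⟨sB, rfl⟩
    exact (reach_mem δ dist T sA sB q).1

lemma bddBelow_reach (T : Q) (sA : Strat Q A) (q : Q) :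
    BddBelow (Set.range fun sB : Strat Q B => reach δ dist T sA sB q) :=
  ⟨0, by rintro _ ⟨sB, rfl⟩; exact (reach_mem δ dist T sA sB q).1⟩

lemma bddAbove_valA (T : Q) (q : Q) :
    BddAbove (Set.range fun sA : Strat Q A => valA δ dist T sA q) :=
  ⟨1, by rintro _ ⟨sA, rfl⟩; exact (valA_mem δ dist T sA q).2⟩

lemma valA_le_reach (T : Q) (sA : Strat Q A) (sB : Strat Q B) (q : Q) :
    valA δ dist T sA q ≤ reach δ dist T sA sB q :=
  ciInf_le (bddBelow_reach δ dist T sA q) sB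

lemma valA_le_value (T : Q) (sA : Strat Q A) (q : Q) :
    valA δ dist T sA q ≤ value δ dist T q :=
  le_ciSup (bddAbove_valA δ dist T q) sA

lemma value_mem (T : Q) (q : Q) : value δ dist T q ∈ Set.Icc (0:ℝ) 1 := by
  constructor
  · exact le_trans (valA_mem δ dist T (Classical.arbitrary _) q).1
      (valA_le_value δ dist T _ q)
  · exact ciSup_le fun sA => (valA_mem δ dist T sA q).2

/-- prepend a fixed first move to a strategy -/
def consS {X : Type} [Fintype X] (x : FDist X) (s : Strat Q X) : Strat Q X :=
  fun h q => match h with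
  | [] => x
  | _ :: t => s t q

lemma consS_nil {X : Type} [Fintype X] (x : FDist X) (s : Strat Q X) (q : Q) :
    consS x s [] q = x := rfl

lemma residual_consS {X : Type} [Fintype X] (x : FDist X) (s : Strat Q X) (q₀ : Q) :
    residual (consS x s) [q₀] = s := rfl

end GenericGame

section OutExtra
variable {O : Type} (u u' : A → B → ℝ)

lemma out_add_smul (y : ℝ) (σ : FDist A) (τ : FDist B) :
    out (fun a b => u a b + y * u' a b) σ τ = out u σ τ + y * out u' σ τ := by
  unfold out
  rw [Finset.mul_sum, ← Finset.sum_add_distrib]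
  refine Finset.sum_congr rfl fun a _ => ?_
  rw [Finset.mul_sum, ← Finset.sum_add_distrib]
  refine Finset.sum_congr rfl fun b _ => by ring

lemma out_mem (h : ∀ a b, u a b ∈ Set.Icc (0:ℝ) 1) (σ : FDist A) (τ : FDist B) :
    out u σ τ ∈ Set.Icc (0:ℝ) 1 := by
  rw [out_eq_sum]
  constructor
  · refine Finset.sum_nonneg fun b _ => mul_nonneg (fd_nonneg τ b) ?_
    exact le_outB u σ b fun a => (h a b).1
  · have h1 : ∑ b, τ.1 b * outB u σ b ≤ ∑ b, τ.1 b * 1 := by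
      refine Finset.sum_le_sum fun b _ => ?_
      exact mul_le_mul_of_nonneg_left (outB_le u σ b fun a => (h a b).2) (fd_nonneg τ b)
    have h2 : ∑ b, τ.1 b * (1:ℝ) = 1 := by rw [← Finset.sum_mul, fd_sum_one, one_mul]
    rw [h2] at h1
    exact h1

end OutExtra

section Tri
variable {O : Type} [Fintype O] [Nonempty O]

/-- Payoff matrix: immediate win probability. -/
def cW (ρ : A → B → O) (E : Set O) (α : O → ℝ) : A → B → ℝ :=
  fun a b => if ρ a b ∈ E then 0 else α (ρ a b)

/-- Payoff matrix: probability of looping. -/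
def cL (ρ : A → B → O) (E : Set O) : A → B → ℝ :=
  fun a b => if ρ a b ∈ E then 1 else 0

variable (ρ : A → B → O) (E : Set O) (α : O → ℝ) (hα : ∀ o ∉ E, α o ∈ Set.Icc (0:ℝ) 1)

lemma extend_decomp (y : ℝ) (a : A) (b : B) :
    extendVal E α y (ρ a b) = cW ρ E α a b + y * cL ρ E a b := by
  unfold extendVal cW cL
  split_ifs <;> ring

lemma cW_mem (hα : ∀ o ∉ E, α o ∈ Set.Icc (0:ℝ) 1) (a : A) (b : B) :
    cW ρ E α a b ∈ Set.Icc (0:ℝ) 1 := by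
  unfold cW
  split_ifs with h
  · norm_num
  · exact hα _ h

lemma cL_mem (a : A) (b : B) : cL ρ E a b ∈ Set.Icc (0:ℝ) 1 := by
  unfold cL
  split_ifs <;> norm_num

lemma out_extend (y : ℝ) (σ : FDist A) (τ : FDist B) :
    out (fun a b => extendVal E α y (ρ a b)) σ τ
      = out (cW ρ E α) σ τ + y * out (cL ρ E) σ τ := by
  have hfe : (fun a b => extendVal E α y (ρ a b))
      = fun a b => cW ρ E α a b + y * cL ρ E a b := by
    funext a b
    exact extend_decomp ρ E α y a b
  rw [hfe, out_add_smul]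

lemma triDist_inl (t : Fin 3) : triDist E α hα (Sum.inl t) = dirac t := rfl

lemma triDist_inr (x : {o : O // o ∉ E}) :
    (triDist E α hα (Sum.inr x)).1 = ![0, α x.1, 1 - α x.1] := rfl

lemma triδ_zero (a : A) (b : B) :
    triδ ρ E 0 a b = if h : ρ a b ∈ E then Sum.inl 0 else Sum.inr ⟨ρ a b, h⟩ := by
  unfold triδ
  rw [if_pos rfl]

lemma triδ_ne (t : Fin 3) (ht : t ≠ 0) (a : A) (b : B) : triδ ρ E t a b = Sum.inl t := by
  unfold triδ
  rw [if_neg ht]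

lemma step_zero_one (σ : FDist A) (τ : FDist B) :
    step (triδ ρ E) (triDist E α hα) σ τ 0 1 = out (cW ρ E α) σ τ := by
  unfold step out
  refine Finset.sum_congr rfl fun a _ => Finset.sum_congr rfl fun b _ => ?_
  congr 1
  rw [triδ_zero]
  by_cases h : ρ a b ∈ E
  · rw [dif_pos h, triDist_inl, dirac_apply]
    simp [cW, h, Fin.ext_iff]
  · rw [dif_neg h, triDist_inr]
    simp [cW, h, Matrix.cons_val_one, Matrix.head_cons]

lemma step_zero_zero (σ : FDist A) (τ : FDist B) :
    step (triδ ρ E) (triDist E α hα) σ τ 0 0 = out (cL ρ E) σ τ := by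
  unfold step out
  refine Finset.sum_congr rfl fun a _ => Finset.sum_congr rfl fun b _ => ?_
  congr 1
  rw [triδ_zero]
  by_cases h : ρ a b ∈ E
  · rw [dif_pos h, triDist_inl, dirac_apply]
    simp [cL, h]
  · rw [dif_neg h, triDist_inr]
    simp [cL, h, Matrix.cons_val_zero]

lemma step_absorb (t : Fin 3) (ht : t ≠ 0) (σ : FDist A) (τ : FDist B) (q' : Fin 3) :
    step (triδ ρ E) (triDist E α hα) σ τ t q' = if q' = t then 1 else 0 := by
  unfold step
  have heq : ∀ (a : A) (b : B),
      (triDist E α hα (triδ ρ E t a b)).1 q' = if q' = t then (1:ℝ) else 0 := by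
    intro a b
    rw [triδ_ne ρ E t ht, triDist_inl, dirac_apply]
  simp_rw [heq]
  split_ifs
  · simpa using sum_mul_one σ τ
  · simp

lemma aux_one (N : ℕ) (sA : Strat (Fin 3) A) (sB : Strat (Fin 3) B) (h : List (Fin 3)) :
    reachSetNAux (triδ ρ E) (triDist E α hα) {1} N sA sB h 1 = 1 := by
  cases N <;> · unfold reachSetNAux; rw [if_pos (Set.mem_singleton _)]

lemma aux_two (N : ℕ) :
    ∀ (sA : Strat (Fin 3) A) (sB : Strat (Fin 3) B) (h : List (Fin 3)),
      reachSetNAux (triδ ρ E) (triDist E α hα) {1} N sA sB h 2 = 0 := by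
  have h2 : (2 : Fin 3) ∉ ({1} : Set (Fin 3)) := by
    rw [Set.mem_singleton_iff]
    decide
  induction N with
  | zero => intro sA sB h; unfold reachSetNAux; rw [if_neg h2]
  | succ N ih =>
    intro sA sB h
    unfold reachSetNAux
    rw [if_neg h2]
    rw [Fin.sum_univ_three]
    rw [step_absorb ρ E α hα 2 (by decide), step_absorb ρ E α hα 2 (by decide),
      step_absorb ρ E α hα 2 (by decide)]
    rw [ih sA sB (h ++ [2])]
    rw [if_neg (show ¬(0:Fin 3) = 2 by decide), if_neg (show ¬(1:Fin 3) = 2 by decide),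
      if_pos (rfl : (2:Fin 3) = 2)]
    norm_num

lemma reachN_rec (N : ℕ) (sA : Strat (Fin 3) A) (sB : Strat (Fin 3) B) :
    reachN (triδ ρ E) (triDist E α hα) 1 (N + 1) sA sB 0
      = out (cW ρ E α) (sA [] 0) (sB [] 0)
        + out (cL ρ E) (sA [] 0) (sB [] 0) *
          reachN (triδ ρ E) (triDist E α hα) 1 N (residual sA [0]) (residual sB [0]) 0 := by
  have h0 : (0 : Fin 3) ∉ ({1} : Set (Fin 3)) := by
    rw [Set.mem_singleton_iff]; decide
  unfold reachN reachSetN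
  conv_lhs => rw [reachSetNAux]
  rw [if_neg h0, Fin.sum_univ_three]
  rw [show ([] : List (Fin 3)) ++ [0] = [0] ++ [] from rfl]
  rw [aux_append, aux_one, aux_two]
  rw [step_zero_zero, step_zero_one]
  ring

lemma reach_rec (sA : Strat (Fin 3) A) (sB : Strat (Fin 3) B) :
    reach (triδ ρ E) (triDist E α hα) 1 sA sB 0
      = out (cW ρ E α) (sA [] 0) (sB [] 0)
        + out (cL ρ E) (sA [] 0) (sB [] 0) *
          reach (triδ ρ E) (triDist E α hα) 1 (residual sA [0]) (residual sB [0]) 0 := by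
  have hshift : reach (triδ ρ E) (triDist E α hα) 1 sA sB 0
      = ⨆ N, reachN (triδ ρ E) (triDist E α hα) 1 (N + 1) sA sB 0 := by
    apply le_antisymm
    · refine ciSup_le fun N => ?_
      have h1 : reachN (triδ ρ E) (triDist E α hα) 1 N sA sB 0
          ≤ reachN (triδ ρ E) (triDist E α hα) 1 (N + 1) sA sB 0 :=
        reachN_mono _ _ 1 sA sB 0 (Nat.le_succ N)
      refine h1.trans (le_ciSup
        (f := fun N => reachN (triδ ρ E) (triDist E α hα) 1 (N + 1) sA sB 0) ?_ N)
      exact ⟨1, by rintro _ ⟨N, rfl⟩; exact (reachN_mem _ _ 1 (N+1) sA sB 0).2⟩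
    · exact ciSup_le fun N => le_ciSup (bddAbove_reachN _ _ 1 sA sB 0) (N + 1)
  rw [hshift]
  simp_rw [reachN_rec ρ E α hα]
  rw [iSup_add_mul _ (bddAbove_reachN _ _ 1 (residual sA [0]) (residual sB [0]) 0) _ _
    (out_mem _ (cL_mem ρ E) _ _).1]
  rfl

variable [Nonempty A] [Nonempty B]

lemma valA_le_step (sA : Strat (Fin 3) A) (b : B) :
    valA (triδ ρ E) (triDist E α hα) 1 sA 0
      ≤ out (cW ρ E α) (sA [] 0) (dirac b)
        + out (cL ρ E) (sA [] 0) (dirac b) *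
          valA (triδ ρ E) (triDist E α hα) 1 (residual sA [0]) 0 := by
  set w := out (cW ρ E α) (sA [] 0) (dirac b)
  set l := out (cL ρ E) (sA [] 0) (dirac b)
  set V' := valA (triδ ρ E) (triDist E α hα) 1 (residual sA [0]) 0
  have hl0 : 0 ≤ l := (out_mem _ (cL_mem ρ E) _ _).1
  have hl1 : l ≤ 1 := (out_mem _ (cL_mem ρ E) _ _).2
  refine le_of_forall_pos_le_add fun ε hε => ?_
  have hlt : valA (triδ ρ E) (triDist E α hα) 1 (residual sA [0]) 0 < V' + ε := by
    simp only [V']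
    linarith
  obtain ⟨sB', hsB'⟩ := exists_lt_of_ciInf_lt hlt
  have hle : valA (triδ ρ E) (triDist E α hα) 1 sA 0
      ≤ reach (triδ ρ E) (triDist E α hα) 1 sA (consS (dirac b) sB') 0 :=
    valA_le_reach _ _ 1 sA _ 0
  rw [reach_rec, residual_consS, consS_nil] at hle
  have hreach0 : 0 ≤ reach (triδ ρ E) (triDist E α hα) 1 (residual sA [0]) sB' 0 :=
    (reach_mem _ _ 1 _ sB' 0).1
  nlinarith [mul_le_mul_of_nonneg_left (le_of_lt hsB') hl0]

lemma step_le_valA (σ : FDist A) (sA' : Strat (Fin 3) A) (sB : Strat (Fin 3) B) :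
    out (cW ρ E α) σ (sB [] 0) + out (cL ρ E) σ (sB [] 0) *
        valA (triδ ρ E) (triDist E α hα) 1 sA' 0
      ≤ reach (triδ ρ E) (triDist E α hα) 1 (consS σ sA') sB 0 := by
  rw [reach_rec, residual_consS, consS_nil]
  have hl0 : 0 ≤ out (cL ρ E) σ (sB [] 0) := (out_mem _ (cL_mem ρ E) _ _).1
  exact add_le_add_right (mul_le_mul_of_nonneg_left (valA_le_reach _ _ 1 sA' _ 0) hl0) _

end Tri

section Upper
variable {O : Type} [Fintype O] [Nonempty O] [Nonempty A] [Nonempty B]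
variable (ρ : A → B → O) (E : Set O) (α : O → ℝ) (hα : ∀ o ∉ E, α o ∈ Set.Icc (0:ℝ) 1)

/-- A best pure response of Player B in the one-shot game valued by `v`. -/
def bRespond (v : ℝ) (σ : FDist A) : B :=
  Classical.choose (exists_optAct (fun a b => extendVal E α v (ρ a b)) σ)

lemma bRespond_spec (v : ℝ) (σ : FDist A) :
    outB (fun a b => extendVal E α v (ρ a b)) σ (bRespond ρ E α v σ)
      = valStratGF (fun a b => extendVal E α v (ρ a b)) σ :=
  Classical.choose_spec (exists_optAct (fun a b => extendVal E α v (ρ a b)) σ)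

/-- The strategy of Player B responding optimally to `sA` at every history. -/
def sBRespond (v : ℝ) (sA : Strat (Fin 3) A) : Strat (Fin 3) B :=
  fun h _ => dirac (bRespond ρ E α v (sA h 0))

lemma residual_sBRespond (v : ℝ) (sA : Strat (Fin 3) A) :
    residual (sBRespond ρ E α v sA) [0] = sBRespond ρ E α v (residual sA [0]) := rfl

lemma upper_aux {v : ℝ} (hv : IsLfpVal ρ E α v) :
    ∀ (N : ℕ) (sA : Strat (Fin 3) A),
      reachN (triδ ρ E) (triDist E α hα) 1 N sA (sBRespond ρ E α v sA) 0 ≤ v := by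
  have h0 : (0 : Fin 3) ∉ ({1} : Set (Fin 3)) := by
    rw [Set.mem_singleton_iff]; decide
  intro N
  induction N with
  | zero =>
    intro sA
    unfold reachN reachSetN reachSetNAux
    rw [if_neg h0]
    exact hv.1.1
  | succ N ih =>
    intro sA
    rw [reachN_rec, residual_sBRespond]
    set σ₀ := sA [] 0
    set b := bRespond ρ E α v σ₀
    have hτ : sBRespond ρ E α v sA [] 0 = dirac b := rfl
    rw [hτ]
    have hl0 : 0 ≤ out (cL ρ E) σ₀ (dirac b) := (out_mem _ (cL_mem ρ E) _ _).1
    have hIH := ih (residual sA [0])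
    have hkey : out (cW ρ E α) σ₀ (dirac b) + out (cL ρ E) σ₀ (dirac b) * v ≤ v := by
      have h1 : out (cW ρ E α) σ₀ (dirac b) + v * out (cL ρ E) σ₀ (dirac b)
          = outB (fun a b' => extendVal E α v (ρ a b')) σ₀ b := by
        rw [← out_dirac, out_extend]
      have h2 : outB (fun a b' => extendVal E α v (ρ a b')) σ₀ b
          ≤ valGF (fun a b' => extendVal E α v (ρ a b')) := by
        rw [bRespond_spec]
        exact valStratGF_le_valGF _ σ₀
      have h3 : valGF (fun a b' => extendVal E α v (ρ a b')) = v := hv.2.1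
      nlinarith
    nlinarith [mul_le_mul_of_nonneg_left hIH hl0]

lemma value_le {v : ℝ} (hv : IsLfpVal ρ E α v) :
    value (triδ ρ E) (triDist E α hα) 1 0 ≤ v := by
  refine ciSup_le fun sA => ?_
  refine le_trans (valA_le_reach _ _ 1 sA (sBRespond ρ E α v sA) 0) ?_
  exact ciSup_le fun N => upper_aux ρ E α hα hv N sA

lemma valStratGF_le_out (u : A → B → ℝ) (σ : FDist A) (τ : FDist B) :
    valStratGF u σ ≤ out u σ τ := by
  rw [valStratGF_eq]
  exact inf'_outB_le_out u σ τ

lemma value_fixed :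
    fval ρ E α (value (triδ ρ E) (triDist E α hα) 1 0)
      = value (triδ ρ E) (triDist E α hα) 1 0 := by
  set V := value (triδ ρ E) (triDist E α hα) 1 0 with hV
  have hV1 : V ≤ 1 := (value_mem _ _ 1 0).2
  refine le_antisymm ?_ ?_
  · -- fval V ≤ V
    have key : ∀ ε : ℝ, 0 < ε → fval ρ E α V ≤ V + ε + ε := by
      intro ε hε
      have h1 : fval ρ E α V - ε < fval ρ E α V := by linarith
      obtain ⟨σ, hσ⟩ := exists_lt_of_lt_ciSup h1
      have h2 : V - ε < V := by linarith
      obtain ⟨sA', hsA'⟩ := exists_lt_of_lt_ciSup h2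
      have h3 : ∀ sB : Strat (Fin 3) B,
          fval ρ E α V - ε - ε ≤ reach (triδ ρ E) (triDist E α hα) 1 (consS σ sA') sB 0 := by
        intro sB
        have h4 := step_le_valA ρ E α hα σ sA' sB
        have hl0 : 0 ≤ out (cL ρ E) σ (sB [] 0) := (out_mem _ (cL_mem ρ E) _ _).1
        have hl1 : out (cL ρ E) σ (sB [] 0) ≤ 1 := (out_mem _ (cL_mem ρ E) _ _).2
        have h5 : out (cW ρ E α) σ (sB [] 0) + V * out (cL ρ E) σ (sB [] 0)
            = out (fun a b => extendVal E α V (ρ a b)) σ (sB [] 0) := (out_extend ρ E α V σ _).symm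
        have h6 : valStratGF (fun a b => extendVal E α V (ρ a b)) σ
            ≤ out (fun a b => extendVal E α V (ρ a b)) σ (sB [] 0) := valStratGF_le_out _ σ _
        nlinarith [mul_le_mul_of_nonneg_left (le_of_lt hsA') hl0]
      have h7 : fval ρ E α V - ε - ε ≤ valA (triδ ρ E) (triDist E α hα) 1 (consS σ sA') 0 :=
        le_ciInf h3
      have h8 := valA_le_value (triδ ρ E) (triDist E α hα) 1 (consS σ sA') 0
      rw [← hV] at h8
      linarith
    by_contra hcon
    push_neg at hcon
    have hd : 0 < (fval ρ E α V - V) / 4 := by linarith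
    have := key _ hd
    linarith
  · -- V ≤ fval V
    refine ciSup_le fun sA => ?_
    have h1 : valA (triδ ρ E) (triDist E α hα) 1 sA 0
        ≤ valStratGF (fun a b => extendVal E α V (ρ a b)) (sA [] 0) := by
      rw [valStratGF_eq, Finset.le_inf'_iff]
      intro b _
      have h2 := valA_le_step ρ E α hα sA b
      have hl0 : 0 ≤ out (cL ρ E) (sA [] 0) (dirac b) := (out_mem _ (cL_mem ρ E) _ _).1
      have h3 : valA (triδ ρ E) (triDist E α hα) 1 (residual sA [0]) 0 ≤ V :=
        valA_le_value _ _ 1 _ 0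
      have h4 : outB (fun a b' => extendVal E α V (ρ a b')) (sA [] 0) b
          = out (cW ρ E α) (sA [] 0) (dirac b) + V * out (cL ρ E) (sA [] 0) (dirac b) := by
        rw [← out_dirac, out_extend]
      nlinarith [mul_le_mul_of_nonneg_left h3 hl0]
    exact h1.trans (valStratGF_le_valGF _ _)

lemma value_eq {v : ℝ} (hv : IsLfpVal ρ E α v) :
    value (triδ ρ E) (triDist E α hα) 1 0 = v := by
  refine le_antisymm (value_le ρ E α hα hv) ?_
  exact hv.2.2 _ (value_mem _ _ 1 0) (value_fixed ρ E α hα)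

end Upper

section Trap
variable {O : Type} [Fintype O] [Nonempty O] [Nonempty A] [Nonempty B]
variable (ρ : A → B → O) (E : Set O) (α : O → ℝ) (hα : ∀ o ∉ E, α o ∈ Set.Icc (0:ℝ) 1)

lemma residual_residual {X : Type} [Fintype X] (s : Strat (Fin 3) X)
    (π π' : List (Fin 3)) : residual (residual s π) π' = residual s (π ++ π') := by
  funext h q
  unfold residual
  rw [List.append_assoc]

lemma residual_nil_apply {X : Type} [Fintype X] (s : Strat (Fin 3) X)
    (h : List (Fin 3)) (q : Fin 3) : residual s h [] q = s h q := by
  unfold residual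
  rw [List.append_nil]

lemma trapped_wl (σ : FDist A) (b : B) (htr : ∀ a ∈ supp σ, ρ a b ∈ E) :
    out (cW ρ E α) σ (dirac b) = 0 ∧ out (cL ρ E) σ (dirac b) = 1 := by
  constructor
  · rw [out_dirac]
    refine Finset.sum_eq_zero fun a _ => ?_
    by_cases ha : σ.1 a = 0
    · rw [ha, zero_mul]
    · have := htr a ha
      unfold cW
      rw [if_pos this, mul_zero]
  · rw [out_dirac]
    unfold outB
    have : ∀ a ∈ Finset.univ, σ.1 a * cL ρ E a b = σ.1 a := by
      intro a _
      by_cases ha : σ.1 a = 0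
      · rw [ha, zero_mul]
      · unfold cL
        rw [if_pos (htr a ha), mul_one]
    rw [Finset.sum_congr rfl this, fd_sum_one]

lemma first_move_opt {v : ℝ} (hv : IsLfpVal ρ E α v) (S : Strat (Fin 3) A)
    (hS : valA (triδ ρ E) (triDist E α hα) 1 S 0 = v) :
    S [] 0 ∈ OptA (fun a b => extendVal E α v (ρ a b)) := by
  have hvalGF : valGF (fun a b => extendVal E α v (ρ a b)) = v := hv.2.1
  show valStratGF (fun a b => extendVal E α v (ρ a b)) (S [] 0)
      = valGF (fun a b => extendVal E α v (ρ a b))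
  refine le_antisymm (valStratGF_le_valGF _ _) ?_
  rw [hvalGF, valStratGF_eq, Finset.le_inf'_iff]
  intro b _
  have h2 := valA_le_step ρ E α hα S b
  have hl0 : 0 ≤ out (cL ρ E) (S [] 0) (dirac b) := (out_mem _ (cL_mem ρ E) _ _).1
  have h3 : valA (triδ ρ E) (triDist E α hα) 1 (residual S [0]) 0 ≤ v := by
    refine le_trans (valA_le_value _ _ 1 _ 0) ?_
    exact value_le ρ E α hα hv
  have h4 : outB (fun a b' => extendVal E α v (ρ a b')) (S [] 0) b
      = out (cW ρ E α) (S [] 0) (dirac b) + v * out (cL ρ E) (S [] 0) (dirac b) := by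
    rw [← out_dirac, out_extend]
  nlinarith [mul_le_mul_of_nonneg_left h3 hl0]

lemma residual_ge {v : ℝ} (hv : IsLfpVal ρ E α v) (S : Strat (Fin 3) A) (b : B)
    (hS : valA (triδ ρ E) (triDist E α hα) 1 S 0 = v)
    (htr : ∀ a ∈ supp (S [] 0), ρ a (b : B) ∈ E) :
    v ≤ valA (triδ ρ E) (triDist E α hα) 1 (residual S [0]) 0 := by
  obtain ⟨hw, hl⟩ := trapped_wl ρ E α (S [] 0) b htr
  have h2 := valA_le_step ρ E α hα S b
  rw [hw, hl] at h2
  rw [hS] at h2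
  linarith

lemma trap {v : ℝ} (hv : IsLfpVal ρ E α v) (hv0 : 0 < v)
    (hNRM : ∀ σA ∈ OptA (fun a b => extendVal E α v (ρ a b)),
        ∃ b ∈ optActs (fun a b => extendVal E α v (ρ a b)) σA,
          ∀ a ∈ supp σA, ρ a b ∈ E)
    (sA : Strat (Fin 3) A) :
    valA (triδ ρ E) (triDist E α hα) 1 sA 0 ≠ value (triδ ρ E) (triDist E α hα) 1 0 := by
  intro hA
  rw [value_eq ρ E α hα hv] at hA
  classical
  set u : A → B → ℝ := fun a b => extendVal E α v (ρ a b) with hu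
  choose bsel hb1 hb2 using hNRM
  set sB : Strat (Fin 3) B := fun h _ =>
    if hopt : sA h 0 ∈ OptA u then dirac (bsel (sA h 0) hopt)
    else dirac (Classical.arbitrary B) with hsB
  have h0 : (0 : Fin 3) ∉ ({1} : Set (Fin 3)) := by
    rw [Set.mem_singleton_iff]; decide
  have main : ∀ (N : ℕ) (h : List (Fin 3)),
      valA (triδ ρ E) (triDist E α hα) 1 (residual sA h) 0 = v →
      reachSetNAux (triδ ρ E) (triDist E α hα) {1} N sA sB h 0 = 0 := by
    intro N
    induction N with
    | zero =>
      intro h _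
      unfold reachSetNAux
      rw [if_neg h0]
    | succ N ih =>
      intro h hres
      have hS0 : residual sA h [] 0 = sA h 0 := residual_nil_apply sA h 0
      have hopt : sA h 0 ∈ OptA u := by
        rw [← hS0]
        exact first_move_opt ρ E α hα hv (residual sA h) hres
      have hsBh : sB h 0 = dirac (bsel (sA h 0) hopt) := by
        rw [hsB]
        simp only
        rw [dif_pos hopt]
      set b := bsel (sA h 0) hopt with hbdef
      have htr : ∀ a ∈ supp (residual sA h [] 0), ρ a b ∈ E := by
        rw [hS0]
        exact hb2 (sA h 0) hopt
      obtain ⟨hw, hl⟩ := trapped_wl ρ E α (residual sA h [] 0) b htr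
      rw [hS0] at hw hl
      have hnext : valA (triδ ρ E) (triDist E α hα) 1 (residual sA (h ++ [0])) 0 = v := by
        refine le_antisymm ?_ ?_
        · refine le_trans (valA_le_value _ _ 1 _ 0) ?_
          exact le_of_eq (value_eq ρ E α hα hv)
        · rw [← residual_residual]
          exact residual_ge ρ E α hα hv (residual sA h) b hres htr
      unfold reachSetNAux
      rw [if_neg h0, Fin.sum_univ_three]
      rw [hsBh]
      rw [step_zero_zero, step_zero_one, hw, hl]
      rw [aux_two]
      rw [ih (h ++ [0]) hnext]
      ring
  have hstart : valA (triδ ρ E) (triDist E α hα) 1 (residual sA []) 0 = v := hA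
  have hreach : reach (triδ ρ E) (triDist E α hα) 1 sA sB 0 = 0 := by
    unfold reach
    have hz : ∀ N, reachN (triδ ρ E) (triDist E α hα) 1 N sA sB 0 = 0 :=
      fun N => main N [] hstart
    simp_rw [reachN] at hz ⊢
    rw [show (fun N => reachSetN (triδ ρ E) (triDist E α hα) {1} N sA sB 0)
        = fun _ => (0:ℝ) from funext hz]
    exact ciSup_const
  have hle := valA_le_reach (triδ ρ E) (triDist E α hα) 1 sA sB 0
  rw [hreach, hA] at hle
  linarith

end Trap

section Lower
variable {O : Type} [Fintype O] [Nonempty O] [Nonempty A] [Nonempty B]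
variable (ρ : A → B → O) (E : Set O) (α : O → ℝ) (hα : ∀ o ∉ E, α o ∈ Set.Icc (0:ℝ) 1)

lemma reach_formula (σ : FDist A) :
    ∀ (N : ℕ) (sB : Strat (Fin 3) B),
      reachN (triδ ρ E) (triDist E α hα) 1 N (ofPos fun _ => σ) sB 0
        = ∑ n ∈ Finset.range N,
            out (cW ρ E α) σ (sB (List.replicate n 0) 0)
              * ∏ k ∈ Finset.range n, out (cL ρ E) σ (sB (List.replicate k 0) 0) := by
  have h0 : (0 : Fin 3) ∉ ({1} : Set (Fin 3)) := by
    rw [Set.mem_singleton_iff]; decide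
  intro N
  induction N with
  | zero =>
    intro sB
    rw [Finset.range_zero, Finset.sum_empty]
    unfold reachN reachSetN reachSetNAux
    rw [if_neg h0]
  | succ N ih =>
    intro sB
    rw [reachN_rec]
    have hres : residual (ofPos fun _ : Fin 3 => σ) [0] = ofPos fun _ : Fin 3 => σ := rfl
    rw [hres, ih (residual sB [0])]
    have hof : (ofPos fun _ : Fin 3 => σ) ([] : List (Fin 3)) 0 = σ := rfl
    rw [hof]
    have hτ : ∀ n, residual sB [0] (List.replicate n 0) 0
        = sB (List.replicate (n+1) 0) 0 := fun n => rfl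
    simp_rw [hτ]
    rw [Finset.sum_range_succ' (fun n => out (cW ρ E α) σ (sB (List.replicate n 0) 0)
      * ∏ k ∈ Finset.range n, out (cL ρ E) σ (sB (List.replicate k 0) 0)) N]
    rw [Finset.mul_sum]
    have h00 : sB (List.replicate 0 0) 0 = sB [] 0 := rfl
    rw [Finset.prod_range_zero, mul_one, ← h00]
    rw [add_comm]
    congr 1
    refine Finset.sum_congr rfl fun n _ => ?_
    rw [Finset.prod_range_succ']
    ring

lemma lower {v : ℝ} (hv : IsLfpVal ρ E α v) (hv0 : 0 < v) (σ : FDist A)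
    (hopt : σ ∈ OptA (fun a b => extendVal E α v (ρ a b)))
    (hesc : ∀ b ∈ optActs (fun a b => extendVal E α v (ρ a b)) σ,
      ∃ a ∈ supp σ, ρ a b ∉ E) :
    v ≤ valA (triδ ρ E) (triDist E α hα) 1 (ofPos fun _ => σ) 0 := by
  classical
  set u : A → B → ℝ := fun a b => extendVal E α v (ρ a b) with hu
  have hvGF : valGF u = v := hv.2.1
  have hvS : valStratGF u σ = v := (show valStratGF u σ = valGF u from hopt).trans hvGF
  -- per-pure-action quantities
  set wb : B → ℝ := fun b => out (cW ρ E α) σ (dirac b) with hwb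
  set lb : B → ℝ := fun b => out (cL ρ E) σ (dirac b) with hlb
  set gb : B → ℝ := fun b => outB u σ b - v with hgb
  have hob : ∀ b, outB u σ b = wb b + v * lb b := by
    intro b
    simp only [hwb, hlb]
    rw [← out_dirac u σ b, hu]
    exact out_extend ρ E α v σ (dirac b)
  have hgb0 : ∀ b, 0 ≤ gb b := by
    intro b
    have := valStratGF_le_outB u σ b
    rw [hvS] at this
    simp only [hgb]
    linarith
  have hlb01 : ∀ b, lb b ∈ Set.Icc (0:ℝ) 1 := fun b => out_mem _ (cL_mem ρ E) σ _
  -- the partition of pure actions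
  set OptF : Finset B := Finset.univ.filter (fun b => b ∈ optActs u σ) with hOptF
  set NOpt : Finset B := Finset.univ.filter (fun b => b ∉ optActs u σ) with hNOpt
  have hOptNe : OptF.Nonempty := by
    obtain ⟨b, hb⟩ := exists_optAct u σ
    exact ⟨b, by rw [hOptF]; exact Finset.mem_filter.2 ⟨Finset.mem_univ b, hb⟩⟩
  -- escape rate on optimal actions
  have hescb : ∀ b ∈ OptF, 0 < 1 - lb b := by
    intro b hb
    have hbmem : b ∈ optActs u σ := (Finset.mem_filter.1 hb).2
    obtain ⟨a, ha, hanE⟩ := hesc b hbmem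
    have hcl : cL ρ E a b = 0 := by unfold cL; rw [if_neg hanE]
    have h1 : 1 - lb b = ∑ a', σ.1 a' * (1 - cL ρ E a' b) := by
      have : ∑ a', σ.1 a' * (1 - cL ρ E a' b) = (∑ a', σ.1 a') - ∑ a', σ.1 a' * cL ρ E a' b := by
        rw [← Finset.sum_sub_distrib]
        exact Finset.sum_congr rfl fun a' _ => by ring
      rw [this, fd_sum_one, hlb]
      simp only
      rw [out_dirac]
      rfl
    have h2 : σ.1 a * (1 - cL ρ E a b) ≤ ∑ a', σ.1 a' * (1 - cL ρ E a' b) := by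
      refine Finset.single_le_sum (f := fun a' => σ.1 a' * (1 - cL ρ E a' b))
        (fun a' _ => ?_) (Finset.mem_univ a)
      exact mul_nonneg (fd_nonneg σ a') (by have := (cL_mem ρ E a' b).2; linarith)
    have hσa : 0 < σ.1 a := lt_of_le_of_ne (fd_nonneg σ a) (Ne.symm ha)
    rw [h1]
    refine lt_of_lt_of_le ?_ h2
    rw [hcl]
    linarith
  set δ₀ : ℝ := OptF.inf' hOptNe (fun b => 1 - lb b) with hδ₀
  have hδ₀pos : 0 < δ₀ := by
    rw [hδ₀, Finset.lt_inf'_iff]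
    exact hescb
  have hδ₀le : δ₀ ≤ 1 := by
    obtain ⟨b, hb⟩ := hOptNe
    refine le_trans (Finset.inf'_le _ hb) ?_
    have := (hlb01 b).1
    linarith
  -- gap on non-optimal actions
  have hgbpos : ∀ b ∈ NOpt, 0 < gb b := by
    intro b hb
    have hbmem : b ∉ optActs u σ := (Finset.mem_filter.1 hb).2
    have hne : outB u σ b ≠ v := by
      intro hcon
      exact hbmem (by rw [optActs, Set.mem_setOf_eq, hvS]; exact hcon)
    have := hgb0 b
    rcases lt_or_eq_of_le this with h | h
    · exact h
    · exfalso; apply hne; simp only [hgb] at h; linarith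
  set ε₀ : ℝ := if hne : NOpt.Nonempty then NOpt.inf' hne gb else 1 with hε₀
  have hε₀pos : 0 < ε₀ := by
    rw [hε₀]
    split_ifs with hne
    · rw [Finset.lt_inf'_iff]; exact hgbpos
    · norm_num
  have hε₀le : ∀ b ∈ NOpt, ε₀ ≤ gb b := by
    intro b hb
    rw [hε₀, dif_pos ⟨b, hb⟩]
    exact Finset.inf'_le _ hb
  -- mixed-action quantities
  have hWL : ∀ τ : FDist B, out u σ τ = out (cW ρ E α) σ τ + v * out (cL ρ E) σ τ :=
    fun τ => out_extend ρ E α v σ τ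
  have hG0 : ∀ τ : FDist B, 0 ≤ out u σ τ - v := by
    intro τ
    have := valStratGF_le_out u σ τ
    rw [hvS] at this
    linarith
  have hGsum : ∀ τ : FDist B, out u σ τ - v = ∑ b, τ.1 b * gb b := by
    intro τ
    rw [out_eq_sum]
    have h1 : ∑ b, τ.1 b * gb b = (∑ b, τ.1 b * outB u σ b) - ∑ b, τ.1 b * v := by
      rw [← Finset.sum_sub_distrib]
      refine Finset.sum_congr rfl fun b _ => ?_
      simp only [hgb]
      ring
    rw [h1, ← Finset.sum_mul, fd_sum_one, one_mul]
  have hLsum : ∀ τ : FDist B, out (cL ρ E) σ τ = ∑ b, τ.1 b * lb b := by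
    intro τ
    rw [out_eq_sum]
    refine Finset.sum_congr rfl fun b _ => ?_
    rw [hlb]
    simp only
    rw [out_dirac]
  -- the dichotomy
  have hdich : ∀ τ : FDist B, ε₀ / 2 ≤ out u σ τ - v ∨ out (cL ρ E) σ τ ≤ 1 - δ₀ / 2 := by
    intro τ
    set μ : ℝ := ∑ b ∈ NOpt, τ.1 b with hμ
    have hμ0 : 0 ≤ μ := Finset.sum_nonneg fun b _ => fd_nonneg τ b
    have hμsum : (∑ b ∈ OptF, τ.1 b) + μ = 1 := by
      rw [hμ, hOptF, hNOpt]
      rw [Finset.sum_filter_add_sum_filter_not]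
      exact fd_sum_one τ
    have hGμ : ε₀ * μ ≤ out u σ τ - v := by
      rw [hGsum]
      have h1 : ∑ b ∈ NOpt, τ.1 b * gb b ≤ ∑ b, τ.1 b * gb b := by
        refine Finset.sum_le_sum_of_subset_of_nonneg (Finset.subset_univ _) fun b _ _ => ?_
        exact mul_nonneg (fd_nonneg τ b) (hgb0 b)
      have h2 : ε₀ * μ ≤ ∑ b ∈ NOpt, τ.1 b * gb b := by
        rw [hμ, Finset.mul_sum]
        refine Finset.sum_le_sum fun b hb => ?_
        rw [mul_comm]
        exact mul_le_mul_of_nonneg_left (hε₀le b hb) (fd_nonneg τ b)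
      linarith
    have hLμ : δ₀ * (1 - μ) ≤ 1 - out (cL ρ E) σ τ := by
      have h1 : 1 - out (cL ρ E) σ τ = ∑ b, τ.1 b * (1 - lb b) := by
        have h2 : ∑ b, τ.1 b * (1 - lb b) = (∑ b, τ.1 b) - ∑ b, τ.1 b * lb b := by
          rw [← Finset.sum_sub_distrib]
          exact Finset.sum_congr rfl fun b _ => by ring
        rw [h2, fd_sum_one, hLsum]
      have h3 : ∑ b ∈ OptF, τ.1 b * (1 - lb b) ≤ ∑ b, τ.1 b * (1 - lb b) := by
        refine Finset.sum_le_sum_of_subset_of_nonneg (Finset.subset_univ _) fun b _ _ => ?_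
        exact mul_nonneg (fd_nonneg τ b) (by have := (hlb01 b).2; linarith)
      have h4 : δ₀ * (1 - μ) ≤ ∑ b ∈ OptF, τ.1 b * (1 - lb b) := by
        have h5 : δ₀ * (1 - μ) = ∑ b ∈ OptF, τ.1 b * δ₀ := by
          rw [← Finset.sum_mul]
          rw [show (∑ b ∈ OptF, τ.1 b) = 1 - μ by linarith]
          ring
        rw [h5]
        refine Finset.sum_le_sum fun b hb => ?_
        refine mul_le_mul_of_nonneg_left ?_ (fd_nonneg τ b)
        rw [hδ₀]
        exact Finset.inf'_le _ hb
      linarith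
    by_cases hμhalf : (1:ℝ)/2 ≤ μ
    · left
      calc ε₀ / 2 = ε₀ * (1/2) := by ring
        _ ≤ ε₀ * μ := mul_le_mul_of_nonneg_left hμhalf (le_of_lt hε₀pos)
        _ ≤ _ := hGμ
    · right
      push_neg at hμhalf
      have : δ₀ * (1/2) ≤ δ₀ * (1 - μ) := by
        refine mul_le_mul_of_nonneg_left ?_ (le_of_lt hδ₀pos)
        linarith
      have hfin : δ₀ / 2 ≤ 1 - out (cL ρ E) σ τ := by
        calc δ₀ / 2 = δ₀ * (1/2) := by ring
          _ ≤ δ₀ * (1 - μ) := this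
          _ ≤ _ := hLμ
      linarith
  -- main argument against an arbitrary sB
  refine le_ciInf fun sB => ?_
  by_contra hcon
  push_neg at hcon
  set R : ℝ := reach (triδ ρ E) (triDist E α hα) 1 (ofPos fun _ : Fin 3 => σ) sB 0 with hR
  set η : ℝ := v - R with hη
  have hηpos : 0 < η := by rw [hη]; linarith
  set τs : ℕ → FDist B := fun n => sB (List.replicate n 0) 0 with hτs
  set W : ℕ → ℝ := fun n => out (cW ρ E α) σ (τs n) with hW
  set L : ℕ → ℝ := fun n => out (cL ρ E) σ (τs n) with hL
  set G : ℕ → ℝ := fun n => out u σ (τs n) - v with hGdef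
  set P : ℕ → ℝ := fun N => ∏ k ∈ Finset.range N, L k with hP
  have hP0 : ∀ N, 0 ≤ P N := fun N =>
    Finset.prod_nonneg fun k _ => (out_mem _ (cL_mem ρ E) σ (τs k)).1
  have hP1 : ∀ N, P N ≤ 1 := fun N =>
    Finset.prod_le_one (fun k _ => (out_mem _ (cL_mem ρ E) σ (τs k)).1)
      (fun k _ => (out_mem _ (cL_mem ρ E) σ (τs k)).2)
  have hSle : ∀ N, ∑ n ∈ Finset.range N, W n * P n ≤ v - η := by
    intro N
    have h1 := reach_formula ρ E α hα σ N sB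
    have h2 : reachN (triδ ρ E) (triDist E α hα) 1 N (ofPos fun _ => σ) sB 0 ≤ R :=
      le_ciSup (bddAbove_reachN _ _ 1 _ sB 0) N
    rw [h1] at h2
    have h3 : ∑ n ∈ Finset.range N, W n * P n
        = ∑ n ∈ Finset.range N, out (cW ρ E α) σ (sB (List.replicate n 0) 0)
            * ∏ k ∈ Finset.range n, out (cL ρ E) σ (sB (List.replicate k 0) 0) := rfl
    rw [h3]
    rw [hη]
    linarith
  have htele : ∀ N, ∑ n ∈ Finset.range N, (1 - L n) * P n = 1 - P N := by
    intro N
    induction N with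
    | zero => simp [hP]
    | succ N ihN =>
      rw [Finset.sum_range_succ, ihN]
      have : P (N + 1) = P N * L N := by
        rw [hP]
        simp only
        rw [Finset.prod_range_succ]
      rw [this]
      ring
  have hdecomp : ∀ N, ∑ n ∈ Finset.range N, W n * P n
      = v * (1 - P N) + ∑ n ∈ Finset.range N, G n * P n := by
    intro N
    have h1 : ∀ n, W n * P n = v * ((1 - L n) * P n) + G n * P n := by
      intro n
      have h2 : G n = W n - v * (1 - L n) := by
        rw [hGdef, hW, hL]
        simp only
        rw [hWL (τs n)]
        ring
      rw [h2]
      ring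
    rw [Finset.sum_congr rfl fun n _ => h1 n, Finset.sum_add_distrib, ← Finset.mul_sum,
      htele N]
  have hGP0 : ∀ n, 0 ≤ G n * P n := fun n => mul_nonneg (hG0 (τs n)) (hP0 n)
  have hPlow : ∀ N, η / v ≤ P N := by
    intro N
    have h1 := hSle N
    rw [hdecomp N] at h1
    have h2 : 0 ≤ ∑ n ∈ Finset.range N, G n * P n :=
      Finset.sum_nonneg fun n _ => hGP0 n
    rw [div_le_iff₀ hv0]
    nlinarith
  have hGPsum : ∀ N, ∑ n ∈ Finset.range N, G n * P n ≤ v - η := by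
    intro N
    have h1 := hSle N
    rw [hdecomp N] at h1
    nlinarith [hP1 N, hP0 N]
  -- choose the horizon
  have hc : 0 < ε₀ / 2 * (η / v) :=
    mul_pos (by linarith) (div_pos hηpos hv0)
  obtain ⟨M, hM⟩ := exists_pow_lt_of_lt_one (div_pos hηpos hv0) (by linarith : 1 - δ₀/2 < 1)
  obtain ⟨K, hK⟩ := exists_nat_gt (v / (ε₀ / 2 * (η / v)))
  have hKc : v < K * (ε₀ / 2 * (η / v)) := by
    rw [div_lt_iff₀ hc] at hK
    linarith
  set N := K + M + 1 with hN
  set s1 : Finset ℕ := (Finset.range N).filter (fun n => ε₀ / 2 ≤ G n) with hs1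
  set s2 : Finset ℕ := (Finset.range N).filter (fun n => ¬ (ε₀ / 2 ≤ G n)) with hs2
  have hcard : s1.card + s2.card = N := by
    rw [hs1, hs2, Finset.card_filter_add_card_filter_not, Finset.card_range]
  have hs1K : s1.card < K := by
    by_contra hge
    push_neg at hge
    have h1 : (K : ℝ) * (ε₀ / 2 * (η / v)) ≤ ∑ n ∈ s1, G n * P n := by
      have h2 : ∀ n ∈ s1, ε₀ / 2 * (η / v) ≤ G n * P n := by
        intro n hn
        have hGn : ε₀ / 2 ≤ G n := (Finset.mem_filter.1 hn).2
        have hPn : η / v ≤ P n := hPlow n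
        have := mul_le_mul hGn hPn (le_of_lt (div_pos hηpos hv0)) (le_trans (by linarith) hGn)
        linarith
      have h3 := Finset.card_nsmul_le_sum s1 (fun n => G n * P n) _ h2
      rw [nsmul_eq_mul] at h3
      calc (K : ℝ) * (ε₀ / 2 * (η / v)) ≤ (s1.card : ℝ) * (ε₀ / 2 * (η / v)) := by
            refine mul_le_mul_of_nonneg_right ?_ (le_of_lt hc)
            exact_mod_cast hge
        _ ≤ _ := h3
    have h4 : ∑ n ∈ s1, G n * P n ≤ ∑ n ∈ Finset.range N, G n * P n := by
      refine Finset.sum_le_sum_of_subset_of_nonneg (Finset.filter_subset _ _) fun n _ _ => hGP0 n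
    have h5 := hGPsum N
    linarith
  have hs2M : M ≤ s2.card := by omega
  have hPN : P N ≤ (1 - δ₀/2) ^ M := by
    have hsplit : P N = (∏ n ∈ s1, L n) * ∏ n ∈ s2, L n := by
      rw [hP]
      simp only
      rw [hs1, hs2, Finset.prod_filter_mul_prod_filter_not]
    have hL01 : ∀ n, L n ∈ Set.Icc (0:ℝ) 1 := fun n => out_mem _ (cL_mem ρ E) σ (τs n)
    have h1 : (∏ n ∈ s1, L n) ≤ 1 :=
      Finset.prod_le_one (fun n _ => (hL01 n).1) (fun n _ => (hL01 n).2)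
    have h2 : (∏ n ∈ s2, L n) ≤ (1 - δ₀/2) ^ s2.card := by
      have h2' : (∏ n ∈ s2, L n) ≤ ∏ _n ∈ s2, (1 - δ₀/2) := by
        refine Finset.prod_le_prod (fun n _ => (hL01 n).1) fun n hn => ?_
        have hGn : ¬ (ε₀ / 2 ≤ G n) := (Finset.mem_filter.1 hn).2
        rcases hdich (τs n) with h | h
        · exact absurd h hGn
        · exact h
      rwa [Finset.prod_const] at h2'
    have h3 : (1 - δ₀/2 : ℝ) ^ s2.card ≤ (1 - δ₀/2) ^ M :=
      pow_le_pow_of_le_one (by linarith) (by linarith) hs2M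
    have h4 : (0:ℝ) ≤ ∏ n ∈ s2, L n := Finset.prod_nonneg fun n _ => (hL01 n).1
    calc P N = (∏ n ∈ s1, L n) * ∏ n ∈ s2, L n := hsplit
      _ ≤ 1 * ∏ n ∈ s2, L n := mul_le_mul_of_nonneg_right h1 h4
      _ = ∏ n ∈ s2, L n := one_mul _
      _ ≤ (1 - δ₀/2) ^ s2.card := h2
      _ ≤ (1 - δ₀/2) ^ M := h3
  have := hPlow N
  linarith

end Lower

end MyAux


end CRG

/-- the initial state `q₀` of the three-state reachability game
`C_{(F,α)}` is maximizable if and only if the game form `F` is reach-maximizable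
w.r.t. `α`. -/
theorem stmt8
    {A B O : Type} [Fintype A] [Fintype B] [Fintype O]
    [Nonempty A] [Nonempty B] [Nonempty O]
    (ρ : A → B → O) (E : Set O) (α : O → ℝ)
    (hα : ∀ o ∉ E, α o ∈ Set.Icc (0:ℝ) 1) :
    CRG.Maximizable (CRG.triδ ρ E) (CRG.triDist E α hα) 1 0 ↔ CRG.RMwrt ρ E α := by
  constructor
  · rintro ⟨sA, hsA⟩ v hv
    by_cases hv0 : v = 0
    · exact Or.inl hv0
    have hvpos : 0 < v := lt_of_le_of_ne hv.1.1 (Ne.symm hv0)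
    right
    by_contra hcon
    push_neg at hcon
    refine CRG.trap ρ E α hα hv hvpos ?_ sA hsA
    intro σA hσA
    obtain ⟨b, hb1, hb2⟩ := hcon σA hσA
    exact ⟨b, hb1, fun a ha => hb2 a ha⟩
  · intro hRM
    obtain ⟨v, hv⟩ := CRG.exists_isLfpVal ρ E α hα
    have hval := CRG.value_eq ρ E α hα hv
    by_cases hv0 : v = 0
    · refine ⟨Classical.arbitrary _,
        le_antisymm (CRG.valA_le_value _ _ 1 _ 0) ?_⟩
      rw [hval, hv0]
      exact (CRG.valA_mem _ _ 1 _ 0).1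
    · have hvpos : 0 < v := lt_of_le_of_ne hv.1.1 (Ne.symm hv0)
      rcases hRM v hv with h | ⟨σ, hσopt, hσesc⟩
      · exact absurd h hv0
      refine ⟨CRG.ofPos fun _ => σ, le_antisymm (CRG.valA_le_value _ _ 1 _ 0) ?_⟩
      rw [hval]
      exact CRG.lower ρ E α hα hv hvpos σ hσopt hσesc
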